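/- Let Φ and Φ' be two states with the same partition into tuples and with equal values at every position except at position a, where Φ[a] > Φ'[a] ≥ 0, and at position b, where Φ[b] < Φ'[b] ≤ 0. If M is a move of type 1, 2 or 3 that is valid for Φ and satisfies M(Φ)[a] = Φ[a], then M is valid for Φ'. -/

import Mathlib

namespace CPaper


/-- The six types of moves on states (all indices 0-based). -/
inductive Move where
  | t1 (d : ℕ)
  | t2 (i : ℕ)
  | t3 (i j : ℕ)
  | t4 (i j : ℕ)
  | t5 (i j : ℕ)
  | t6 (i j : ℕ)

/-- A state is a list of tuples of integers. -/
abbrev State := List (List ℤ)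

/-- A genuine state: at least one tuple, and all tuples nonempty. -/
def IsState (Φ : State) : Prop := Φ ≠ [] ∧ ∀ t ∈ Φ, t ≠ []

/-- The entries of a state, read in order (flattened). -/
def entries (Φ : State) : List ℤ := Φ.flatten

/-- The number of positions of a state. -/
def numPos (Φ : State) : ℕ := (entries Φ).length

/-- The value at the (0-based) position `i` of the state `Φ`. -/
def entry (Φ : State) (i : ℕ) : ℤ := (entries Φ).getD i 0

/-- The (0-based) index of the tuple containing the flat position `i`. -/
def tupleIdx : State → ℕ → ℕ
  | [], _ => 0
  | t :: ts, i => if i < t.length then 0 else tupleIdx ts (i - t.length) + 1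

/-- Positions `i` and `j` lie in the same tuple of `Φ`. -/
def SameTuple (Φ : State) (i j : ℕ) : Prop := tupleIdx Φ i = tupleIdx Φ j

/-- Position `i` is dominant in `Φ`: its value bounds the absolute value of
every entry of the tuple containing it. -/
def DominantAt (Φ : State) (i : ℕ) : Prop :=
  ∀ k, k < numPos Φ → SameTuple Φ i k → |entry Φ k| ≤ entry Φ i

/-- Apply `f` at flat position `i`, preserving the tuple structure. -/
def modifyFlat (f : ℤ → ℤ) : ℕ → State → State
  | _, [] => []
  | i, t :: ts =>
    if i < t.length then (t.take i ++ f (t.getD i 0) :: t.drop (i + 1)) :: ts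
    else t :: modifyFlat f (i - t.length) ts

/-- Concatenate the `d`-th and `(d+1)`-th tuples of `Φ` (0-based). -/
def joinAt (Φ : State) (d : ℕ) : State :=
  Φ.take d ++ (Φ.getD d [] ++ Φ.getD (d + 1) []) :: Φ.drop (d + 2)

/-- The action of a move on a state. -/
def Move.apply : Move → State → State
  | .t1 d, Φ => joinAt Φ d
  | .t2 i, Φ => modifyFlat (· + 1) i Φ
  | .t3 i j, Φ => modifyFlat (· - 1) j (modifyFlat (· + 1) i Φ)
  | .t4 i j, Φ => modifyFlat (· - 1) j (modifyFlat (· + 1) i Φ)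
  | .t5 i j, Φ => modifyFlat (· + 1) j (modifyFlat (· + 1) i Φ)
  | .t6 i j, Φ => modifyFlat (· + 1) j (modifyFlat (· + 1) i Φ)

/-- A move is admissible for `Φ` when its indices are within bounds. -/
def Move.Admissible : Move → State → Prop
  | .t1 d, Φ => d + 1 < Φ.length
  | .t2 i, Φ => i < numPos Φ
  | .t3 i j, Φ => i < numPos Φ ∧ j < numPos Φ ∧ i ≠ j
  | .t4 i j, Φ => i < numPos Φ ∧ j < numPos Φ ∧ i ≠ j
  | .t5 i j, Φ => i < numPos Φ ∧ j < numPos Φ ∧ i ≠ j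
  | .t6 i j, Φ => i < numPos Φ ∧ j < numPos Φ ∧ i ≠ j

/-- Validity of a move for a state. -/
def Move.Valid : Move → State → Prop
  | .t1 d, Φ => d + 1 < Φ.length
  | .t2 i, Φ => i < numPos Φ ∧ DominantAt Φ i
  | .t3 i j, Φ =>
      i < numPos Φ ∧ j < numPos Φ ∧ i ≠ j ∧ SameTuple Φ i j ∧ DominantAt Φ i ∧ entry Φ j ≤ 0
  | .t4 i j, Φ =>
      i < numPos Φ ∧ j < numPos Φ ∧ i ≠ j ∧ SameTuple Φ i j ∧ DominantAt Φ i ∧ 0 < entry Φ j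
  | .t5 i j, Φ =>
      i < numPos Φ ∧ j < numPos Φ ∧ i ≠ j ∧ SameTuple Φ i j ∧ DominantAt Φ i ∧ entry Φ j < 0
  | .t6 i j, Φ =>
      i < numPos Φ ∧ j < numPos Φ ∧ i ≠ j ∧ SameTuple Φ i j ∧ DominantAt Φ i ∧ 0 ≤ entry Φ j

def Move.isType1 : Move → Prop
  | .t1 _ => True
  | _ => False

def Move.isType2 : Move → Prop
  | .t2 _ => True
  | _ => False

def Move.isType3 : Move → Prop
  | .t3 _ _ => True
  | _ => False

/-- The move is of one of the types 1, 2 or 3. -/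
def Move.isType123 : Move → Prop
  | .t1 _ => True
  | .t2 _ => True
  | .t3 _ _ => True
  | _ => False

/-- `ValidSeq ms Φ Ψ`: the list of moves `ms`, applied in order starting from `Φ`,
consists of valid moves and ends at `Ψ`. -/
def ValidSeq : List Move → State → State → Prop
  | [], Φ, Ψ => Φ = Ψ
  | m :: ms, Φ, Ψ => m.Valid Φ ∧ ValidSeq ms (m.apply Φ) Ψ

/-- A tuple of integers is C*_{Z,6}-realizable: the one-tuple state `[l]` is reachable
from `((0),...,(0))` by a finite sequence of valid moves of types 1–6. -/
def CStarZ6 (l : List ℤ) : Prop :=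
  ∃ ms : List Move, ValidSeq ms (List.replicate l.length ([0] : List ℤ)) [l]

/-- A tuple of integers is C*_{Z,3}-realizable: the one-tuple state `[l]` is reachable
from `((0),...,(0))` by a finite sequence of valid moves of types 1, 2 and 3. -/
def CStarZ3 (l : List ℤ) : Prop :=
  ∃ ms : List Move, (∀ m ∈ ms, m.isType123) ∧
    ValidSeq ms (List.replicate l.length ([0] : List ℤ)) [l]


lemma tupleIdx_congr : ∀ (Φ Φ' : State), Φ.map List.length = Φ'.map List.length →
    ∀ i, tupleIdx Φ i = tupleIdx Φ' i
  | [], [], _, i => rfl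
  | t :: ts, t' :: ts', h, i => by
    simp only [List.map_cons, List.cons.injEq] at h
    simp only [tupleIdx, h.1, tupleIdx_congr ts ts' h.2]
  | [], _ :: _, h, i => by simp at h
  | _ :: _, [], h, i => by simp at h

lemma numPos_congr (Φ Φ' : State) (h : Φ.map List.length = Φ'.map List.length) :
    numPos Φ = numPos Φ' := by
  simp only [numPos, entries, List.length_flatten, h]

lemma entries_modifyFlat (f : ℤ → ℤ) : ∀ (i : ℕ) (Φ : State),
    entries (modifyFlat f i Φ) =
      if i < numPos Φ then
        (entries Φ).take i ++ f (entry Φ i) :: (entries Φ).drop (i + 1)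
      else entries Φ
  | i, [] => by simp [modifyFlat, entries, numPos]
  | i, t :: ts => by
    by_cases h : i < t.length
    · have h1 : i < numPos (t :: ts) := by
        simp only [numPos, entries, List.flatten_cons, List.length_append]; omega
      have h2 : entry (t :: ts) i = t.getD i 0 := by
        simp only [entry, entries, List.flatten_cons, List.getD_eq_getElem?_getD,
          List.getElem?_append_left h]
      simp only [modifyFlat, if_pos h, entries, List.flatten_cons, if_pos h1, h2,
        List.take_append_of_le_length (le_of_lt h),
        List.drop_append_of_le_length (by omega : i + 1 ≤ t.length)]
      simp
    · have hn : numPos (t :: ts) = t.length + numPos ts := by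
        simp only [numPos, entries, List.flatten_cons, List.length_append]
      simp only [modifyFlat, if_neg h, entries, List.flatten_cons]
      have IH := entries_modifyFlat f (i - t.length) ts
      simp only [entries] at IH
      rw [IH]
      by_cases h' : i - t.length < numPos ts
      · rw [if_pos h', if_pos (by omega : i < numPos (t :: ts))]
        have e1 : (t ++ ts.flatten).take i = t ++ ts.flatten.take (i - t.length) := by
          rw [List.take_append, List.take_of_length_le (by omega)]
        have e2 : entry (t :: ts) i = entry ts (i - t.length) := by
          simp only [entry, entries, List.flatten_cons, List.getD_eq_getElem?_getD,
            List.getElem?_append_right (by omega : t.length ≤ i)]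
        have e3 : (t ++ ts.flatten).drop (i + 1) = ts.flatten.drop (i - t.length + 1) := by
          rw [List.drop_append, List.drop_of_length_le (by omega)]
          simp only [List.nil_append]
          congr 1
          omega
        rw [e1, e2, e3, List.append_assoc]
      · rw [if_neg h', if_neg (by omega)]
  termination_by i Φ => Φ.length

lemma numPos_modifyFlat (f : ℤ → ℤ) (i : ℕ) (Φ : State) :
    numPos (modifyFlat f i Φ) = numPos Φ := by
  show (entries (modifyFlat f i Φ)).length = (entries Φ).length
  rw [entries_modifyFlat]
  by_cases hc : i < numPos Φ
  · rw [if_pos hc]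
    have hc' : i < (entries Φ).length := hc
    simp only [List.length_append, List.length_take, List.length_cons, List.length_drop]
    omega
  · rw [if_neg hc]

lemma entry_modifyFlat_self (f : ℤ → ℤ) (i : ℕ) (Φ : State) (h : i < numPos Φ) :
    entry (modifyFlat f i Φ) i = f (entry Φ i) := by
  have h' : i < (entries Φ).length := h
  simp only [entry, entries_modifyFlat, if_pos h, List.getD_eq_getElem?_getD]
  rw [List.getElem?_append_right (by simp only [List.length_take]; omega)]
  simp only [List.length_take]
  rw [show i - min i (entries Φ).length = 0 by omega]
  simp

lemma entry_modifyFlat_ne (f : ℤ → ℤ) (i k : ℕ) (Φ : State) (hk : k ≠ i) :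
    entry (modifyFlat f i Φ) k = entry Φ k := by
  simp only [entry, entries_modifyFlat]
  split
  · rename_i h
    have h' : i < (entries Φ).length := h
    simp only [List.getD_eq_getElem?_getD]
    rcases lt_or_gt_of_ne hk with hlt | hgt
    · rw [List.getElem?_append_left (by simp only [List.length_take]; omega)]
      rw [List.getElem?_take, if_pos hlt]
    · rw [List.getElem?_append_right (by simp only [List.length_take]; omega)]
      have hmin : min i (entries Φ).length = i := Nat.min_eq_left (le_of_lt h')
      simp only [List.length_take, hmin]
      rw [show k - i = (k - i - 1) + 1 by omega]
      simp only [List.getElem?_cons_succ, List.getElem?_drop]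
      have : i + 1 + (k - i - 1) = k := by omega
      rw [this]
  · rfl


/-- Technical lemma: let `Φ` and `Φ'` coincide (with the same partition into tuples)
except at position `a`, where `Φ[a] > Φ'[a] ≥ 0`, and at position `b`, where
`Φ[b] < Φ'[b] ≤ 0`. If `M` is a valid move of type 1, 2 or 3 for `Φ` with
`M(Φ)[a] = Φ[a]`, then `M` is valid for `Φ'`. -/
theorem valid_of_decrease_positive_increase_negative
    (Φ Φ' : State) (hΦ : IsState Φ) (hΦ' : IsState Φ')
    (hshape : Φ.map List.length = Φ'.map List.length)
    (a b : ℕ) (ha : a < numPos Φ) (hb : b < numPos Φ) (hab : a ≠ b)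
    (heq : ∀ k, k < numPos Φ → k ≠ a → k ≠ b → entry Φ k = entry Φ' k)
    (haval : entry Φ' a < entry Φ a) (haval' : 0 ≤ entry Φ' a)
    (hbval : entry Φ b < entry Φ' b) (hbval' : entry Φ' b ≤ 0)
    (M : Move) (hM : M.isType123) (hMval : M.Valid Φ)
    (hMa : entry (M.apply Φ) a = entry Φ a) :
    M.Valid Φ' := by
  have hnum : numPos Φ = numPos Φ' := numPos_congr Φ Φ' hshape
  have htup : ∀ i, tupleIdx Φ i = tupleIdx Φ' i := tupleIdx_congr Φ Φ' hshape
  have habs : ∀ k, k < numPos Φ → |entry Φ' k| ≤ |entry Φ k| := by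
    intro k hkn
    by_cases hka : k = a
    · subst hka
      rw [abs_of_nonneg haval', abs_of_nonneg (by linarith)]
      linarith
    · by_cases hkb : k = b
      · subst hkb
        rw [abs_of_nonpos hbval', abs_of_nonpos (by linarith)]
        linarith
      · rw [heq k hkn hka hkb]
  have hbneg : entry Φ b < 0 := by linarith
  have hnotb : ∀ i, DominantAt Φ i → i = b → False := by
    intro i hd hib
    rw [hib] at hd
    have h1 := hd b hb rfl
    have h2 := abs_nonneg (entry Φ b)
    linarith
  have hdom' : ∀ i, i < numPos Φ → i ≠ a → i ≠ b → DominantAt Φ i → DominantAt Φ' i := by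
    intro i hi hia hib hd k hk hst
    rw [← hnum] at hk
    rw [← heq i hi hia hib]
    calc |entry Φ' k| ≤ |entry Φ k| := habs k hk
      _ ≤ entry Φ i := hd k hk (by
          unfold SameTuple at hst ⊢
          rw [htup i, htup k]; exact hst)
  cases M with
  | t1 d =>
    have hlen : Φ.length = Φ'.length := by
      have := congrArg List.length hshape
      simpa using this
    show d + 1 < Φ'.length
    exact hlen ▸ hMval
  | t2 i =>
    obtain ⟨hi, hd⟩ := hMval
    have hia : i ≠ a := by
      intro h
      subst h
      simp only [Move.apply] at hMa
      rw [entry_modifyFlat_self _ _ _ hi] at hMa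
      omega
    have hib : i ≠ b := fun h => (hnotb i hd h).elim
    exact ⟨hnum ▸ hi, hdom' i hi hia hib hd⟩
  | t3 i j =>
    obtain ⟨hi, hj, hij, hst, hd, hjle⟩ := hMval
    simp only [Move.apply] at hMa
    have hia : i ≠ a := by
      intro h
      subst h
      rw [entry_modifyFlat_ne _ j i _ hij, entry_modifyFlat_self _ _ _ hi] at hMa
      omega
    have hja : j ≠ a := by
      intro h
      subst h
      rw [entry_modifyFlat_self _ _ _ (by rw [numPos_modifyFlat]; exact hj),
        entry_modifyFlat_ne _ i j _ (Ne.symm hij)] at hMa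
      omega
    have hib : i ≠ b := fun h => (hnotb i hd h).elim
    have hst' : SameTuple Φ' i j := by
      unfold SameTuple at hst ⊢
      rw [← htup i, ← htup j]; exact hst
    have hjle' : entry Φ' j ≤ 0 := by
      by_cases hjb : j = b
      · subst hjb; exact hbval'
      · rw [← heq j hj hja hjb]; exact hjle
    exact ⟨hnum ▸ hi, hnum ▸ hj, hij, hst', hdom' i hi hia hib hd, hjle'⟩
  | t4 i j => exact hM.elim
  | t5 i j => exact hM.elim
  | t6 i j => exact hM.elim


end CPaper
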